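/- There exists a primitive root g modulo 11527 such that the cosets X_i = g^i·H (0 ≤ i < 34, indices mod 34) of the subgroup H of 34th-power residues in 𝔽_11527^× form a 17-color Directed Ramsey algebra, i.e., with m = 17: (1) for all i, X_i + X_i = ⋃_{j ≠ i} X_j; (2) for all i, X_i + X_{i+17} = {0} ∪ ⋃_{j ∉ {i, i+17}} X_j; (3) for all i, j with i ≠ j and j ≠ i+17, X_i + X_j = 𝔽_11527 ∖ {0}. -/
import Mathlib


open Pointwise

/-- The set of nonzero `n`-th power residues in `𝔽_p = ZMod p`. -/
def Hpow (p n : ℕ) : Set (ZMod p) := {x | ∃ u : (ZMod p)ˣ, (u : ZMod p) ^ n = x}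

/-- The coset `X_i = g^i · H` of the subgroup of `n`-th power residues. -/
noncomputable def Xc (p n : ℕ) [Fact p.Prime] (g : ZMod p) (i : ℤ) : Set (ZMod p) :=
  g ^ i • Hpow p n

instance : Fact (Nat.Prime 11527) := ⟨by norm_num⟩

namespace S15

abbrev F : Type := ZMod 11527

def gg : F := ((5 : ℕ) : F)
def ww : F := ((6288 : ℕ) : F)

def Bt : List (List ℕ) := [[0,897,4875,753,1352,8001,1,5884,5875,7279,1538,9246,5749,2036,3787,3889,9034,2993,7873,7659,6354,10905,9702,8386,4981,2186,1515,7557,1017,6831,10482,5738,10296,10109],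
  [5723,7408,6302,6321,10180,11053,8278,11344,122,3739,9663,9848,5424,4437,5085,5691,7918,6366,6721,8080,7575,4828,8091,518,9796,6805,9511,3438,3024,5,5372,7690,85,10683],
  [5874,4670,10256,1086,834,10658,5401,6935,11072,3195,2590,3869,7168,2295,25,4493,5819,7035,9439,4689,3294,2459,8776,866,3357,7831,10971,10746,6303,8551,2371,2164,9157,5009],
  [10481,1259,6041,9299,10938,10820,8461,328,5430,6824,3612,9532,6109,5695,7622,5792,2125,5172,4330,7818,7699,4751,2833,3050,1909,4943,9252,9917,125,906,5742,7182,5261,8174],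
  [1661,4530,5817,1329,2538,9912,3840,6295,7329,9434,6339,3642,152,9154,8368,10123,2806,3168,9955,7115,9770,4385,4509,3529,9415,3914,387,8526,625,7645,6127,7151,7992,6533],
  [10456,4507,10227,3505,3269,506,2503,11018,3667,6683,1062,6645,7581,8641,2742,6677,1935,8953,4653,3125,11189,4104,8421,8391,7673,11123,7655,3143,8200,8305,994,6527,2064,1174],
  [2919,6944,6808,10320,7524,859,7064,3055,3694,7536,9837,4872,6419,8347,10184,10726,2034,8982,9675,5310,10171,9507,6693,3097,4098,8728,9581,9348,3841,988,6236,2223,3784,9326],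
  [10848,5492,5116,10384,6296,6575,6943,1796,4596,7522,5611,1427,2267,8963,3099,1055,3077,9041,5266,4940,7393,1306,2289,139,9735,10329,8874,3846,7678,632,10,10986,9413,10810],
  [11335,9214,681,5575,10624,7416,3029,11445,3809,2784,3968,8980,1694,7942,99,10234,957,2567,4721,3858,5001,3668,4681,8822,10405,2840,5537,532,10714,5953,1646,8426,11453,1073],
  [3405,6259,10503,11117,393,1094,1308,9529,3028,9596,5945,10718,5030,1523,11157,4785,7549,7754,3717,10567,10860,4853,2069,1945,8470,8230,4631,7763,8313,5062,6948,3475,1484,3632],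
  [6569,9677,774,4234,10501,4189,6540,6407,6891,3009,285,1211,2096,4661,2256,9908,6633,9477,1242,6750,479,7482,1872,8978,7680,10664,5848,2466,11337,101,6727,159,1965,1374],
  [9761,4436,4521,10480,2667,505,9825,1277,7212,2517,6870,5255,5069,339,9791,3518,4355,2553,9360,4296,9643,3432,5006,7685,3494,9601,6397,6250,9190,10581,2395,11280,8947,9646],
  [5943,10292,7221,6797,6063,9938,7876,2847,2525,10653,11369,1068,2107,9294,1495,2122,5181,1695,6385,1146,1238,10590,7095,2089,10248,10154,982,9793,3521,448,4068,3017,7955,10324],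
  [4662,2240,3558,7261,3931,8406,8475,9040,3582,10708,10610,10737,8548,3735,2708,362,3460,8871,8348,5111,5730,5399,7475,5290,1958,5782,2857,4799,10931,7299,7157,5352,10535,7693],
  [8629,2794,10550,7432,6567,9774,9836,6942,6263,11200,7166,2394,10619,8547,3825,3396,571,11074,3898,3884,5490,7506,941,7159,5856,2501,7449,9128,1724,7794,8321,6758,4262,3706],
  [6417,9892,6585,7099,8564,702,2842,6020,5811,4076,1241,8154,10065,10736,3304,129,7893,2443,6226,8261,443,4705,6703,9781,7003,2188,10258,2762,1280,7024,8178,11003,4389,3519],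
  [4217,9035,7046,2683,1368,471,1793,7427,2797,1535,9724,5057,7983,434,6245,4932,10156,10669,7241,6400,3352,4993,6309,2215,354,10453,2283,2807,1441,6724,10461,8519,4884,7515],
  [0,9627,2458,6951,9954,7759,11033,1888,3440,10566,3279,2170,3225,6197,9441,9558,5233,0,5803,5982,1366,1878,6157,8965,2568,11415,8014,2508,7891,7286,2231,6840,2355,7296],
  [4874,10244,4868,4598,5961,4708,7731,10149,1682,4630,6335,10850,174,6274,5489,5673,11146,10967,6862,6856,10103,4225,4318,248,6722,7874,3111,3662,6762,763,3443,9716,10016,1033],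
  [8410,5074,5311,319,10556,11463,8727,9495,1667,10063,8142,9693,4028,5165,1316,1240,11096,3815,90,9543,11226,227,4074,5112,5065,4391,9324,4407,10678,6783,10756,4698,3859,9553],
  [9109,7282,9054,1882,6672,7672,10201,6200,8613,7548,10022,2506,4067,1135,10861,450,4210,5519,3501,7469,9473,999,5053,436,10172,10621,6580,117,2316,6129,9372,131,6427,8843],
  [2764,414,822,9096,624,6030,7975,7591,3159,655,6032,2211,7094,11185,7793,11355,10964,8484,10689,5713,11135,623,6835,4002,3779,10306,2328,9081,9523,4897,8197,4959,9508,9927],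
  [1273,3760,6836,9298,3374,759,5294,11178,3122,1507,6932,10900,5007,3328,7165,113,3527,7839,889,5422,5149,8483,10899,5015,8712,2293,4268,7337,2404,6404,3120,10748,2925,5321],
  [493,3795,4083,6108,8966,10310,7535,3098,8979,11126,10350,8317,11465,2153,2104,9782,2380,4195,3248,565,9813,1981,9023,11303,7273,3416,7834,2691,949,7160,4684,1690,4614,5343],
  [16,8753,1928,5741,1328,5857,465,3094,4589,5553,7379,2825,7486,10534,366,9905,6723,3579,3661,7004,8713,8888,508,1186,8838,10520,10105,4745,10249,9092,10407,9612,6222,496],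
  [6492,2632,9859,10561,4711,2502,7770,3943,1132,2659,6562,9640,2314,3258,2605,1502,2483,2849,6778,1028,8056,5462,4156,10948,80,2598,8498,8616,9278,671,11418,8920,10367,9274],
  [3355,5140,1463,9919,2718,10019,400,2329,43,6859,3187,4763,4269,3777,3214,8499,10836,501,7510,2195,4702,2092,888,9406,7217,2631,983,10945,5849,9253,5649,326,9150,9991],
  [3987,5191,8210,8802,2969,2063,8579,761,8821,2672,118,4778,8072,8617,2692,2000,10460,3439,4440,1628,2505,9926,10747,2103,6256,4408,10926,11241,10587,157,5248,922,9685,7315],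
  [6192,10513,3805,10097,5816,1075,9619,10000,9737,7901,3522,1933,3489,5779,6827,2209,8226,8408,6550,4851,1994,590,4881,7534,8504,637,3186,10315,3318,9429,1703,11438,2665,4610],
  [4924,11195,7498,7906,5382,1758,11523,4180,3089,7257,11045,9665,8146,5375,2793,3892,1201,6467,5672,2577,8334,5841,3925,7939,3962,9291,8529,3383,6457,11081,6989,6119,5467,689],
  [30,11,7076,11507,7361,2217,9373,5185,3752,4281,2909,9455,6151,9281,10238,9873,4949,9117,3742,9231,5114,5564,9297,3821,4271,1566,2261,5391,9935,8098,7791,2714,9691,8179],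
  [5288,5084,2871,2043,3476,3124,1450,5353,9480,10112,6790,2516,2636,47,4374,11085,6516,377,4766,9878,757,1691,772,5389,11004,11427,3219,10463,5909,3018,6332,7701,1820,8161],
  [1968,5853,8455,737,275,11027,1053,138,11087,10343,8912,2828,10896,1653,6522,3032,10417,2366,776,8019,4093,10046,3282,8991,7903,6491,8516,6448,1885,3924,9100,7179,3563,235],
  [5018,9979,3707,10374,8093,7999,1314,5265,8109,8372,303,7694,3880,10073,5010,11318,4883,8761,6121,975,9401,8938,4967,9492,8449,7773,9027,1175,6211,7981,9425,4934,3633,1370]]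

def bt (d c : ℕ) : ℕ := (Bt.getD d []).getD c 0

lemma cast_pow_mod (a e : ℕ) : ((a : ℕ) : F) ^ e = ((a ^ e % 11527 : ℕ) : F) := by
  rw [ZMod.natCast_mod, Nat.cast_pow]

lemma natcast_eq_iff (a b : ℕ) : ((a : ℕ) : F) = ((b : ℕ) : F) ↔ a % 11527 = b % 11527 :=
  ZMod.natCast_eq_natCast_iff a b 11527

lemma chain (a v : ℕ) (e : ℕ) (h : a ^ e % 11527 = v) : ((a:ℕ):F) ^ e = ((v:ℕ):F) := by
  rw [cast_pow_mod, h]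

lemma hgne : gg ≠ 0 := by decide

lemma hgPR : IsPrimitiveRoot gg 11526 := by
  have c113 : ((5:ℕ):F) ^ (113:ℕ) = ((9791:ℕ):F) := chain _ _ _ (by decide)
  have hord : orderOf gg = 11526 := by
    apply orderOf_eq_of_pow_and_pow_div_prime (by norm_num)
    · exact ZMod.pow_card_sub_one_eq_one hgne
    · intro q hq hqd
      have hq4 : q = 2 ∨ q = 3 ∨ q = 17 ∨ q = 113 := by
        have h2 : q ∣ 2 * (3 * (17 * 113)) := by norm_num at hqd ⊢; exact hqd
        rcases (Nat.Prime.dvd_mul hq).mp h2 with h | h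
        · exact Or.inl ((Nat.prime_dvd_prime_iff_eq hq (by norm_num)).mp h)
        rcases (Nat.Prime.dvd_mul hq).mp h with h | h
        · exact Or.inr (Or.inl ((Nat.prime_dvd_prime_iff_eq hq (by norm_num)).mp h))
        rcases (Nat.Prime.dvd_mul hq).mp h with h | h
        · exact Or.inr (Or.inr (Or.inl ((Nat.prime_dvd_prime_iff_eq hq (by norm_num)).mp h)))
        · exact Or.inr (Or.inr (Or.inr ((Nat.prime_dvd_prime_iff_eq hq (by norm_num)).mp h)))
      rcases hq4 with rfl | rfl | rfl | rfl
      · rw [show (11526/2 : ℕ) = 113 * 17 * 3 from by norm_num, gg, pow_mul, pow_mul, c113,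
          chain 9791 5518 17 (by decide), chain 5518 11526 3 (by decide)]
        decide
      · rw [show (11526/3 : ℕ) = 113 * 17 * 2 from by norm_num, gg, pow_mul, pow_mul, c113,
          chain 9791 5518 17 (by decide), chain 5518 5517 2 (by decide)]
        decide
      · rw [show (11526/17 : ℕ) = 113 * 3 * 2 from by norm_num, gg, pow_mul, pow_mul, c113,
          chain 9791 6288 3 (by decide), chain 6288 1334 2 (by decide)]
        decide
      · rw [show (11526/113 : ℕ) = 17 * 3 * 2 from by norm_num, gg, pow_mul, pow_mul,
          chain 5 2170 17 (by decide), chain 2170 7891 3 (by decide),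
          chain 7891 10554 2 (by decide)]
        decide
  exact hord ▸ IsPrimitiveRoot.orderOf gg

noncomputable def gu : Fˣ := (isUnit_iff_ne_zero.mpr hgne).unit

lemma hguc : (gu : F) = gg := IsUnit.unit_spec _

lemma hcardu : Fintype.card Fˣ = 11526 := by
  rw [ZMod.card_units_eq_totient, Nat.totient_prime (by norm_num)]

lemma htop : Subgroup.zpowers gu = ⊤ := by
  apply Subgroup.eq_top_of_card_eq
  rw [Nat.card_zpowers, Nat.card_eq_fintype_card, hcardu, ← orderOf_units, hguc,
    hgPR.eq_orderOf.symm]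

lemma EXZ (x : F) (hx : x ≠ 0) : ∃ t : ℤ, gg ^ t = x := by
  obtain ⟨k, hk⟩ := Subgroup.mem_zpowers_iff.mp
    (htop ▸ Subgroup.mem_top ((isUnit_iff_ne_zero.mpr hx).unit))
  refine ⟨k, ?_⟩
  have := congrArg (Units.val) hk
  rwa [Units.val_zpow_eq_zpow_val, hguc, IsUnit.unit_spec] at this

lemma hwval : gg ^ (339 : ℕ) = ww := by
  rw [gg, cast_pow_mod, show (5:ℕ)^339 % 11527 = 6288 from by decide]; rfl

lemma hwne : ww ≠ 0 := by decide

lemma hx339 (x : F) (t : ℤ) (ht : gg ^ t = x) : x ^ (339 : ℕ) = ww ^ t := by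
  rw [← ht, ← zpow_natCast (gg ^ t) 339, ← zpow_mul, mul_comm, zpow_mul,
    show ((339:ℕ):ℤ) = (339:ℤ) from rfl, show (339:ℤ) = ((339:ℕ):ℤ) from rfl,
    zpow_natCast, hwval]

lemma hzp (t : ℤ) : (gg ^ t) ^ (339 : ℕ) = ww ^ t := hx339 _ t rfl

lemma hw_one (t : ℤ) : ww ^ t = 1 ↔ (34 : ℤ) ∣ t := by
  have h1 : ww ^ t = gg ^ ((339 : ℤ) * t) := by
    rw [zpow_mul, show (339:ℤ) = ((339:ℕ):ℤ) from rfl, zpow_natCast, hwval]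
  rw [h1, hgPR.zpow_eq_one_iff_dvd]
  constructor
  · intro ⟨s, hs⟩; exact ⟨s, by omega⟩
  · intro ⟨s, hs⟩; exact ⟨s, by omega⟩

lemma WIFF (s t : ℤ) : ww ^ s = ww ^ t ↔ ((s : ZMod 34) = (t : ZMod 34)) := by
  rw [ZMod.intCast_eq_intCast_iff]
  constructor
  · intro h
    have h1 : ww ^ (s - t) = 1 := by
      rw [zpow_sub₀ hwne, h, div_self (zpow_ne_zero t hwne)]
    have h2 := (hw_one _).mp h1
    exact (Int.modEq_iff_dvd.mpr (by omega : (34:ℤ) ∣ t - s))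
  · intro h
    have h2 : (34 : ℤ) ∣ s - t := Int.ModEq.dvd h.symm
    have h1 : ww ^ (s - t) = 1 := (hw_one _).mpr h2
    rw [zpow_sub₀ hwne] at h1
    rwa [div_eq_one_iff_eq (zpow_ne_zero t hwne)] at h1

lemma MEMH (y : F) : y ∈ Hpow 11527 34 ↔ y ^ (339 : ℕ) = 1 := by
  constructor
  · rintro ⟨u, rfl⟩
    rw [← pow_mul, show (34 * 339 : ℕ) = 11526 from rfl, ← Units.val_pow_eq_pow_val,
      ← hcardu, pow_card_eq_one, Units.val_one]
  · intro hy
    have hy0 : y ≠ 0 := by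
      intro h; rw [h, zero_pow (by norm_num)] at hy; exact one_ne_zero hy.symm
    obtain ⟨t, ht⟩ := EXZ y hy0
    have hwt : ww ^ t = 1 := by rw [← hx339 y t ht, hy]
    obtain ⟨s, rfl⟩ := (hw_one t).mp hwt
    refine ⟨gu ^ s, ?_⟩
    rw [Units.val_zpow_eq_zpow_val, hguc, ← zpow_natCast (gg ^ s) 34, ← zpow_mul, mul_comm]
    exact ht

lemma MEM (i : ℤ) (x : F) : x ∈ Xc 11527 34 gg i ↔ x ^ (339 : ℕ) = ww ^ i := by
  rw [Xc, Set.mem_smul_set]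
  constructor
  · rintro ⟨y, hy, rfl⟩
    rw [smul_eq_mul, mul_pow, (MEMH y).mp hy, mul_one, hzp]
  · intro hx
    refine ⟨gg ^ (-i) * x, ?_, ?_⟩
    · rw [MEMH, mul_pow, hx, hzp, ← zpow_add₀ hwne]
      simp
    · rw [smul_eq_mul, ← mul_assoc, ← zpow_add₀ hgne, add_neg_cancel, zpow_zero, one_mul]

lemma hneg1 : ww ^ (17 : ℕ) = -1 := by
  rw [ww, cast_pow_mod, show (6288:ℕ)^17 % 11527 = 11526 from by decide]
  decide

lemma hw17 : ww ^ (17 : ℤ) = -1 := by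
  rw [show (17 : ℤ) = ((17 : ℕ) : ℤ) from rfl, zpow_natCast, hneg1]

lemma key {i j c : ℤ} {x : F} (hx : x ^ (339:ℕ) = ww ^ c) (B : F)
    (hB : B ^ (339:ℕ) = ww ^ (j - i)) (hB1 : (1 + B) ^ (339:ℕ) = ww ^ (c - i)) :
    ∃ a b : F, a ^ (339:ℕ) = ww ^ i ∧ b ^ (339:ℕ) = ww ^ j ∧ a + b = x := by
  have h1B : (1 + B) ≠ 0 := by
    intro h
    rw [h, zero_pow (by norm_num)] at hB1
    exact (zpow_ne_zero _ hwne) hB1.symm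
  refine ⟨x / (1 + B), x / (1 + B) * B, ?_, ?_, ?_⟩
  · rw [div_pow, hx, hB1, ← zpow_sub₀ hwne, show c - (c - i) = i from by ring]
  · rw [mul_pow, div_pow, hx, hB1, ← zpow_sub₀ hwne, hB, ← zpow_add₀ hwne,
      show c - (c - i) + (j - i) = j from by ring]
  · have h2 : x / (1 + B) + x / (1 + B) * B = (x / (1 + B)) * (1 + B) := by ring
    rw [h2, div_mul_cancel₀ _ h1B]

lemma red (γ : F) (m : ℕ) (hm : 0 < m) (hord : γ ^ m = 1) (s : ℤ) :
    γ ^ s = γ ^ ((s % (m : ℤ)).toNat) ∧ (s % (m : ℤ)).toNat < m := by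
  have hmz : (m : ℤ) ≠ 0 := by omega
  have h0 : 0 ≤ s % (m : ℤ) := Int.emod_nonneg s hmz
  have h1 : s % (m : ℤ) < m := Int.emod_lt_of_pos s (by omega)
  constructor
  · by_cases hγ : γ = 0
    · subst hγ
      rw [zero_pow (by omega : m ≠ 0)] at hord
      exact absurd hord.symm one_ne_zero
    have h2 : γ ^ s = γ ^ ((m : ℤ) * (s / (m:ℤ)) + s % (m:ℤ)) := by
      rw [Int.mul_ediv_add_emod]
    rw [h2, zpow_add₀ hγ, zpow_mul, zpow_natCast, hord, one_zpow, one_mul,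
      ← zpow_natCast γ ((s % (m:ℤ)).toNat), Int.toNat_of_nonneg h0]
  · omega

lemma gamord : ((5884 : ℕ) : F) ^ (339 : ℕ) = 1 := by
  rw [cast_pow_mod, show (5884:ℕ)^339 % 11527 = 1 from by decide]; rfl

lemma wwpow34 : ww ^ (34 : ℕ) = 1 := by
  rw [← hwval, ← pow_mul, show (339 * 34 : ℕ) = 11526 from rfl]
  exact ZMod.pow_card_sub_one_eq_one hgne

lemma PAR (h : F) (hh : h ^ (339 : ℕ) = 1) : ∃ e : ℕ, e < 339 ∧ h = ((5884 : ℕ) : F) ^ e := by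
  have h0 : h ≠ 0 := by
    intro hz; rw [hz, zero_pow (by norm_num)] at hh; exact one_ne_zero hh.symm
  obtain ⟨t, ht⟩ := EXZ h h0
  have hwt : ww ^ t = 1 := by rw [← hx339 h t ht, hh]
  obtain ⟨s, rfl⟩ := (hw_one t).mp hwt
  have hγ : gg ^ ((34 : ℤ) * s) = ((5884 : ℕ) : F) ^ s := by
    rw [zpow_mul, show (34:ℤ) = ((34:ℕ):ℤ) from rfl, zpow_natCast, gg, cast_pow_mod,
      show (5:ℕ)^34 % 11527 = 5884 from by decide]
  obtain ⟨hred, hlt⟩ := red ((5884 : ℕ) : F) 339 (by norm_num) gamord s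
  exact ⟨_, hlt, by rw [← ht, hγ, hred]⟩

lemma PAR17 (h : F) (hh : h ^ (339 : ℕ) = -1) :
    ∃ e : ℕ, e < 339 ∧ h = ((2170 : ℕ) : F) * ((5884 : ℕ) : F) ^ e := by
  have h2170 : ((2170 : ℕ) : F) ^ (339 : ℕ) = -1 := by
    rw [cast_pow_mod, show (2170:ℕ)^339 % 11527 = 11526 from by decide]; decide
  have h2ne : ((2170 : ℕ) : F) ≠ 0 := by decide
  have hq : (h * ((2170 : ℕ) : F)⁻¹) ^ (339 : ℕ) = 1 := by
    rw [mul_pow, hh, inv_pow, h2170]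
    simp
  obtain ⟨e, he, heq⟩ := PAR _ hq
  refine ⟨e, he, ?_⟩
  have := congrArg (· * ((2170 : ℕ) : F)) heq
  simp only [inv_mul_cancel_right₀ h2ne] at this
  rw [this]; ring


set_option maxRecDepth 20000 in
lemma N1 : ∀ e < 339, ((1 + 5884^e % 11527) % 11527)^339 % 11527 ≠ 1 := by decide

set_option maxRecDepth 20000 in
lemma N2 : ∀ e < 339, ((1 + (2170 * 5884^e) % 11527) % 11527)^339 % 11527 ≠ 1 ∧
    ((1 + (2170 * 5884^e) % 11527) % 11527)^339 % 11527 ≠ 11526 := by decide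

set_option maxHeartbeats 4000000 in
set_option maxRecDepth 20000 in
lemma WIT : ∀ d < 34, ∀ c < 34, ((d = 0 ∨ d = 17) → (c ≠ 0 ∧ c ≠ d)) →
    (bt d c)^339 % 11527 = 6288^d % 11527 ∧
    ((1 + bt d c)^339) % 11527 = 6288^c % 11527 := by decide

lemma neg1 (h : F) (hh : h ^ (339 : ℕ) = 1) : (1 + h) ^ (339 : ℕ) ≠ 1 := by
  obtain ⟨e, he, rfl⟩ := PAR h hh
  intro hcon
  apply N1 e he
  have h1 : ((1 + 5884^e % 11527 : ℕ) : F) = 1 + ((5884 : ℕ) : F) ^ e := by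
    push_cast [ZMod.natCast_mod]
    ring
  rw [← h1, cast_pow_mod] at hcon
  rw [show (1:F) = ((1:ℕ):F) from by rw [Nat.cast_one]] at hcon
  have h3 := (natcast_eq_iff _ _).mp hcon
  rw [Nat.mod_mod_of_dvd _ dvd_rfl] at h3
  rw [← Nat.pow_mod]
  omega

lemma neg2 (h : F) (hh : h ^ (339 : ℕ) = -1) :
    (1 + h) ^ (339 : ℕ) ≠ 1 ∧ (1 + h) ^ (339 : ℕ) ≠ -1 := by
  obtain ⟨e, he, rfl⟩ := PAR17 h hh
  have h1 : ((1 + (2170 * 5884^e) % 11527 : ℕ) : F)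
      = 1 + ((2170 : ℕ) : F) * ((5884 : ℕ) : F) ^ e := by
    push_cast [ZMod.natCast_mod]
    ring
  constructor
  · intro hcon
    apply (N2 e he).1
    rw [← h1, cast_pow_mod] at hcon
    rw [show (1:F) = ((1:ℕ):F) from by rw [Nat.cast_one]] at hcon
    have h3 := (natcast_eq_iff _ _).mp hcon
    rw [Nat.mod_mod_of_dvd _ dvd_rfl] at h3
    rw [← Nat.pow_mod]
    omega
  · intro hcon
    apply (N2 e he).2
    rw [← h1, cast_pow_mod, show (-1 : F) = ((11526 : ℕ) : F) from by decide] at hcon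
    have h3 := (natcast_eq_iff _ _).mp hcon
    rw [Nat.mod_mod_of_dvd _ dvd_rfl] at h3
    rw [← Nat.pow_mod]
    omega

lemma zmcast (s : ℤ) : ((((s % 34).toNat : ℕ) : ZMod 34) = ((s : ℤ) : ZMod 34)) := by
  have h0 : 0 ≤ s % 34 := Int.emod_nonneg s (by norm_num)
  have : (((s % 34).toNat : ℤ) : ZMod 34) = ((s : ℤ) : ZMod 34) := by
    rw [Int.toNat_of_nonneg h0, ZMod.intCast_eq_intCast_iff]
    exact Int.emod_emod_of_dvd s dvd_rfl
  rwa [Int.cast_natCast] at this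

lemma surj (i j c : ℤ) (x : F) (hx : x ^ (339:ℕ) = ww ^ c)
    (hcond : ((j : ZMod 34) = (i : ZMod 34) ∨ (j : ZMod 34) = ((i + 17 : ℤ) : ZMod 34)) →
      ((c : ZMod 34) ≠ (i : ZMod 34) ∧ (c : ZMod 34) ≠ (j : ZMod 34))) :
    ∃ a b : F, a ^ (339:ℕ) = ww ^ i ∧ b ^ (339:ℕ) = ww ^ j ∧ a + b = x := by
  set d' : ℕ := ((j - i) % 34).toNat with hd'
  set c' : ℕ := ((c - i) % 34).toNat with hc'
  obtain ⟨hredd, hltd⟩ := red ww 34 (by norm_num) wwpow34 (j - i)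
  obtain ⟨hredc, hltc⟩ := red ww 34 (by norm_num) wwpow34 (c - i)
  have hdcast : ((d' : ℕ) : ZMod 34) = ((j - i : ℤ) : ZMod 34) := zmcast (j - i)
  have hccast : ((c' : ℕ) : ZMod 34) = ((c - i : ℤ) : ZMod 34) := zmcast (c - i)
  have hpre : (d' = 0 ∨ d' = 17) → (c' ≠ 0 ∧ c' ≠ d') := by
    intro hd
    have hdisj : (j : ZMod 34) = (i : ZMod 34) ∨ (j : ZMod 34) = ((i + 17 : ℤ) : ZMod 34) := by
      rcases hd with hd | hd
      · left
        have : ((0 : ℕ) : ZMod 34) = ((j - i : ℤ) : ZMod 34) := hd ▸ hdcast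
        push_cast at this
        linear_combination -this
      · right
        have : ((17 : ℕ) : ZMod 34) = ((j - i : ℤ) : ZMod 34) := hd ▸ hdcast
        push_cast at this ⊢
        linear_combination -this
    obtain ⟨hc1, hc2⟩ := hcond hdisj
    constructor
    · intro h0
      apply hc1
      have : ((0 : ℕ) : ZMod 34) = ((c - i : ℤ) : ZMod 34) := h0 ▸ hccast
      push_cast at this
      linear_combination -this
    · intro h0
      apply hc2
      have : ((c - i : ℤ) : ZMod 34) = ((j - i : ℤ) : ZMod 34) := by
        rw [← hccast, ← hdcast, h0]
      push_cast at this
      linear_combination this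
  obtain ⟨hw1, hw2⟩ := WIT d' hltd c' hltc hpre
  refine key hx ((bt d' c' : ℕ) : F) ?_ ?_
  · rw [cast_pow_mod, hw1, ← cast_pow_mod 6288, hredd]
    rfl
  · rw [show (1 : F) + ((bt d' c' : ℕ) : F) = (((1 + bt d' c' : ℕ)) : F) from by push_cast; ring,
      cast_pow_mod, hw2, ← cast_pow_mod 6288, hredc]
    rfl

lemma two_ne : (2 : F) ≠ 0 := by decide

end S15

open S15 in
set_option maxRecDepth 20000 in
set_option maxHeartbeats 4000000 in
/-- The cosets of the index-34 subgroup of `𝔽_11527ˣ` form a 17-color Directed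
Ramsey algebra. -/
theorem stmt_15 : ∃ g : ZMod 11527, IsPrimitiveRoot g 11526 ∧
    (∀ i : ℤ, Xc 11527 34 g i + Xc 11527 34 g i =
      ⋃ j ∈ {j : ℤ | (j : ZMod 34) ≠ (i : ZMod 34)}, Xc 11527 34 g j) ∧
    (∀ i : ℤ, Xc 11527 34 g i + Xc 11527 34 g (i + 17) =
      {(0 : ZMod 11527)} ∪ ⋃ j ∈ {j : ℤ | (j : ZMod 34) ≠ (i : ZMod 34) ∧
        (j : ZMod 34) ≠ ((i + 17 : ℤ) : ZMod 34)}, Xc 11527 34 g j) ∧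
    (∀ i j : ℤ, (j : ZMod 34) ≠ (i : ZMod 34) → (j : ZMod 34) ≠ ((i + 17 : ℤ) : ZMod 34) →
      Xc 11527 34 g i + Xc 11527 34 g j = {(0 : ZMod 11527)}ᶜ) := by
  refine ⟨gg, hgPR, ?_, ?_, ?_⟩
  · -- condition (1)
    intro i
    ext x
    simp only [Set.mem_iUnion, Set.mem_setOf_eq, Set.mem_add, MEM]
    constructor
    · rintro ⟨a, ha, b, hb, rfl⟩
      have hwine : ww ^ i ≠ 0 := zpow_ne_zero i hwne
      have ha0 : a ≠ 0 := by
        intro h; rw [h, zero_pow (by norm_num)] at ha; exact hwine ha.symm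
      have hxne : a + b ≠ 0 := by
        intro h0
        have hb' : b = -a := eq_neg_of_add_eq_zero_right h0
        rw [hb', Odd.neg_pow (Nat.odd_iff.mpr rfl : Odd 339), ha] at hb
        have h2 : (2 : F) * ww ^ i = 0 := by linear_combination - hb
        exact (mul_ne_zero two_ne hwine) h2
      obtain ⟨t, ht⟩ := EXZ _ hxne
      have hx : (a + b) ^ (339:ℕ) = ww ^ t := hx339 _ _ ht
      refine ⟨t, ⟨?_, hx⟩⟩
      intro hti
      have hxwi : (a + b) ^ (339:ℕ) = ww ^ i := by rw [hx, (WIFF t i).mpr hti]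
      have hh : (a⁻¹ * b) ^ (339:ℕ) = 1 := by
        rw [mul_pow, inv_pow, ha, hb, inv_mul_cancel₀ hwine]
      have h1h : (1 + a⁻¹ * b) ^ (339:ℕ) = 1 := by
        have he : (1 + a⁻¹ * b) = a⁻¹ * (a + b) := by field_simp
        rw [he, mul_pow, inv_pow, ha, hxwi, inv_mul_cancel₀ hwine]
      exact neg1 _ hh h1h
    · rintro ⟨j, hji, hxj⟩
      obtain ⟨a, b, ha, hb, hab⟩ := surj i i j x hxj (fun _ => ⟨hji, hji⟩)
      exact ⟨a, ha, b, hb, hab⟩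
  · -- condition (2)
    intro i
    ext x
    simp only [Set.mem_union, Set.mem_singleton_iff, Set.mem_iUnion, Set.mem_setOf_eq,
      Set.mem_add, MEM]
    constructor
    · rintro ⟨a, ha, b, hb, rfl⟩
      have hwine : ww ^ i ≠ 0 := zpow_ne_zero i hwne
      have ha0 : a ≠ 0 := by
        intro h; rw [h, zero_pow (by norm_num)] at ha; exact hwine ha.symm
      by_cases h0 : a + b = 0
      · exact Or.inl h0
      right
      obtain ⟨t, ht⟩ := EXZ _ h0
      have hx : (a + b) ^ (339:ℕ) = ww ^ t := hx339 _ _ ht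
      have hh : (a⁻¹ * b) ^ (339:ℕ) = -1 := by
        rw [mul_pow, inv_pow, ha, hb, inv_mul_eq_div, ← zpow_sub₀ hwne,
          show i + 17 - i = (17:ℤ) from by ring, hw17]
      refine ⟨t, ⟨⟨?_, ?_⟩, hx⟩⟩
      · intro hti
        have hxwi : (a + b) ^ (339:ℕ) = ww ^ i := by rw [hx, (WIFF t i).mpr hti]
        have h1h : (1 + a⁻¹ * b) ^ (339:ℕ) = 1 := by
          have he : (1 + a⁻¹ * b) = a⁻¹ * (a + b) := by field_simp
          rw [he, mul_pow, inv_pow, ha, hxwi, inv_mul_cancel₀ hwine]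
        exact (neg2 _ hh).1 h1h
      · intro hti
        have hxwi : (a + b) ^ (339:ℕ) = ww ^ (i + 17) := by rw [hx, (WIFF t (i+17)).mpr hti]
        have h1h : (1 + a⁻¹ * b) ^ (339:ℕ) = -1 := by
          have he : (1 + a⁻¹ * b) = a⁻¹ * (a + b) := by field_simp
          rw [he, mul_pow, inv_pow, ha, hxwi, inv_mul_eq_div, ← zpow_sub₀ hwne,
            show i + 17 - i = (17:ℤ) from by ring, hw17]
        exact (neg2 _ hh).2 h1h
    · rintro (rfl | ⟨j, ⟨hj1, hj2⟩, hxj⟩)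
      · refine ⟨gg ^ i, hx339 _ i rfl, -(gg ^ i), ?_, by ring⟩
        rw [Odd.neg_pow (Nat.odd_iff.mpr rfl : Odd 339), hx339 _ i rfl, zpow_add₀ hwne, hw17]
        ring
      · obtain ⟨a, b, ha, hb, hab⟩ := surj i (i + 17) j x hxj (fun _ => ⟨hj1, hj2⟩)
        exact ⟨a, ha, b, hb, hab⟩
  · -- condition (3)
    intro i j hj1 hj2
    ext x
    simp only [Set.mem_compl_iff, Set.mem_singleton_iff, Set.mem_add, MEM]
    constructor
    · rintro ⟨a, ha, b, hb, rfl⟩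
      intro h0
      have hb' : b = -a := eq_neg_of_add_eq_zero_right h0
      rw [hb', Odd.neg_pow (Nat.odd_iff.mpr rfl : Odd 339), ha] at hb
      apply hj2
      rw [← WIFF]
      rw [← hb, zpow_add₀ hwne, hw17]
      ring
    · intro hx0
      obtain ⟨t, ht⟩ := EXZ _ hx0
      have hx : x ^ (339:ℕ) = ww ^ t := hx339 _ _ ht
      obtain ⟨a, b, ha, hb, hab⟩ := surj i j t x hx
        (fun hd => absurd hd (by push_neg; exact ⟨hj1, hj2⟩))
      exact ⟨a, ha, b, hb, hab⟩
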